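/- Let C : ℝ → ℝ be nonnegative, even, integrable with support in [-δ, δ], β = ∫_{-δ}^{δ} C(y) dy, and γ_h = ∫_{-δ}^{δ} C(y) cos(hy) dy. In the Fourier trigonometric Galerkin discretization of the peridynamic eigenvalue problem on [0, 2π] with basis ψ_k(x) = e^{ikx}, the stiffness entries are a_{hk} = 2π δ_{h,-k}(β - γ_h) and the mass entries are m_{hk} = 2π δ_{h,-k}; consequently M^{-1}A is diagonal with entries λ_h = β - γ_h ≥ 0. -/

import Mathlib

open MeasureTheory Set Real Complex

lemma key_orth (n : ℤ) :
    ∫ x in Icc (0:ℝ) (2*π), Complex.exp ((n:ℂ) * x * Complex.I)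
      = if n = 0 then (2*π : ℂ) else 0 := by
  have h2π : (0:ℝ) ≤ 2*π := by positivity
  rw [integral_Icc_eq_integral_Ioc, ← intervalIntegral.integral_of_le h2π]
  by_cases hn : n = 0
  · simp [hn, Complex.ofReal_mul]
  · rw [if_neg hn]
    have hc : (n:ℂ) * Complex.I ≠ 0 := by simp [Complex.I_ne_zero, hn]
    have : ∀ x : ℝ, (n:ℂ) * x * Complex.I = ((n:ℂ)*Complex.I) * x := by intro x; ring
    simp_rw [this]
    rw [integral_exp_mul_complex hc]
    have h1 : (n:ℂ) * Complex.I * ((2*π:ℝ):ℂ) = (n:ℂ) * (2*π*Complex.I) := by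
      push_cast; ring
    rw [h1, Complex.exp_int_mul_two_pi_mul_I]
    simp

lemma odd_zero (δ : ℝ) (hδ : 0 ≤ δ) (f : ℝ → ℝ)
    (hf : IntegrableOn f (Icc (-δ) δ))
    (hodd : ∀ y, f (-y) = - f y) : ∫ y in Icc (-δ) δ, f y = 0 := by
  have hle : (-δ) ≤ δ := by linarith
  have hii : IntervalIntegrable f volume (-δ) δ :=
    (intervalIntegrable_iff_integrableOn_Icc_of_le hle).2 hf
  have h1 : IntervalIntegrable f volume (-δ) 0 := by
    apply hii.mono_set
    rw [uIcc_of_le hle, uIcc_of_le (by linarith : (-δ:ℝ) ≤ 0)]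
    exact Icc_subset_Icc le_rfl hδ
  have h2 : IntervalIntegrable f volume 0 δ := by
    apply hii.mono_set
    rw [uIcc_of_le hle, uIcc_of_le hδ]
    exact Icc_subset_Icc (by linarith) le_rfl
  have e1 : ∫ x in (-δ)..(0:ℝ), f x = ∫ x in (0:ℝ)..δ, f (-x) := by
    rw [intervalIntegral.integral_comp_neg]; norm_num
  rw [integral_Icc_eq_integral_Ioc, ← intervalIntegral.integral_of_le hle,
    ← intervalIntegral.integral_add_adjacent_intervals h1 h2, e1]
  simp_rw [hodd]
  rw [intervalIntegral.integral_neg]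
  ring

/-- Entries of the Fourier trigonometric Galerkin matrices for the periodic
peridynamic eigenvalue problem: `a_{hk} = 2π δ_{h,-k}(β - γ_h)`,
`m_{hk} = 2π δ_{h,-k}`, and the resulting eigenvalues `β - γ_h` are
nonnegative. -/
theorem fourier_galerkin_entries
    (δ : ℝ) (hδ0 : 0 < δ) (hδπ : δ ≤ π) (C : ℝ → ℝ)
    (hCnonneg : ∀ y : ℝ, 0 ≤ C y)
    (hCeven : ∀ y : ℝ, C (-y) = C y)
    (hCint : IntegrableOn C (Icc (-δ) δ))
    (hCsupp : ∀ y : ℝ, y ∉ Icc (-δ) δ → C y = 0)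
    (h k : ℤ) :
    (-(∫ x in Icc 0 (2 * π),
        Complex.exp ((k : ℂ) * (x : ℂ) * Complex.I) *
          ∫ y in Icc (-δ) δ, (C y : ℂ) *
            (Complex.exp ((h : ℂ) * ((x : ℝ) + y : ℝ) * Complex.I)
              - Complex.exp ((h : ℂ) * (x : ℂ) * Complex.I)))
      = (if h = -k then 1 else 0) * (2 * (π : ℂ)) *
          (((∫ y in Icc (-δ) δ, C y)
            - ∫ y in Icc (-δ) δ, C y * Real.cos ((h : ℝ) * y) : ℝ) : ℂ)) ∧
    ((∫ x in Icc 0 (2 * π),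
        Complex.exp ((h : ℂ) * (x : ℂ) * Complex.I) *
          Complex.exp ((k : ℂ) * (x : ℂ) * Complex.I))
      = (if h = -k then 1 else 0) * (2 * (π : ℂ))) ∧
    (0 ≤ (∫ y in Icc (-δ) δ, C y)
          - ∫ y in Icc (-δ) δ, C y * Real.cos ((h : ℝ) * y)) := by
  set s : Set ℝ := Icc (-δ) δ with hs
  -- integrability facts
  have hmcos : AEStronglyMeasurable (fun y : ℝ => Real.cos ((h:ℝ)*y))
      (volume.restrict s) :=
    (Real.continuous_cos.comp (continuous_const.mul continuous_id)).aestronglyMeasurable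
  have hmsin : AEStronglyMeasurable (fun y : ℝ => Real.sin ((h:ℝ)*y))
      (volume.restrict s) :=
    (Real.continuous_sin.comp (continuous_const.mul continuous_id)).aestronglyMeasurable
  have hcos : IntegrableOn (fun y => C y * Real.cos ((h:ℝ)*y)) s := by
    have := hCint.bdd_mul (c := 1) hmcos (ae_of_all _ fun y => by
      simpa [Real.norm_eq_abs] using Real.abs_cos_le_one ((h:ℝ)*y))
    simpa [mul_comm, IntegrableOn] using this
  have hsin : IntegrableOn (fun y => C y * Real.sin ((h:ℝ)*y)) s := by
    have := hCint.bdd_mul (c := 1) hmsin (ae_of_all _ fun y => by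
      simpa [Real.norm_eq_abs] using Real.abs_sin_le_one ((h:ℝ)*y))
    simpa [mul_comm, IntegrableOn] using this
  have hsin0 : ∫ y in s, C y * Real.sin ((h:ℝ)*y) = 0 := by
    apply odd_zero δ hδ0.le _ hsin
    intro y
    rw [hCeven]
    simp [mul_neg, Real.sin_neg]
  -- the inner y-integral
  have hJ : ∫ y in s, (C y : ℂ) * (Complex.exp ((h:ℂ) * y * Complex.I) - 1)
      = (((∫ y in s, C y * Real.cos ((h:ℝ)*y)) - ∫ y in s, C y : ℝ) : ℂ) := by
    have hpt : ∀ y : ℝ, (C y : ℂ) * (Complex.exp ((h:ℂ) * y * Complex.I) - 1)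
        = ((C y * Real.cos ((h:ℝ)*y) - C y : ℝ) : ℂ)
          + ((C y * Real.sin ((h:ℝ)*y) : ℝ) : ℂ) * Complex.I := by
      intro y
      have : (h:ℂ) * (y:ℂ) * Complex.I = ((((h:ℝ)*y : ℝ)):ℂ) * Complex.I := by
        push_cast; ring
      rw [this, Complex.exp_mul_I, ← Complex.ofReal_cos, ← Complex.ofReal_sin]
      push_cast; ring
    simp_rw [hpt]
    have h1 : Integrable (fun y : ℝ => ((C y * Real.cos ((h:ℝ)*y) - C y : ℝ) : ℂ))
        (volume.restrict s) := (hcos.sub hCint).ofReal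
    have h2 : Integrable (fun y : ℝ => ((C y * Real.sin ((h:ℝ)*y) : ℝ) : ℂ) * Complex.I)
        (volume.restrict s) := hsin.ofReal.mul_const Complex.I
    have e1 : (∫ a in s, ((C a * Real.cos ((h:ℝ)*a) - C a : ℝ) : ℂ))
        = ((∫ a in s, (C a * Real.cos ((h:ℝ)*a) - C a) : ℝ) : ℂ) := integral_ofReal
    have e2 : (∫ a in s, ((C a * Real.sin ((h:ℝ)*a) : ℝ) : ℂ))
        = ((∫ a in s, C a * Real.sin ((h:ℝ)*a) : ℝ) : ℂ) := integral_ofReal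
    rw [integral_add h1 h2, integral_mul_const, e1, e2,
      integral_sub hcos hCint, hsin0]
    simp
  -- part 1
  have part1 : (-(∫ x in Icc 0 (2 * π),
        Complex.exp ((k : ℂ) * (x : ℂ) * Complex.I) *
          ∫ y in Icc (-δ) δ, (C y : ℂ) *
            (Complex.exp ((h : ℂ) * ((x : ℝ) + y : ℝ) * Complex.I)
              - Complex.exp ((h : ℂ) * (x : ℂ) * Complex.I)))
      = (if h = -k then 1 else 0) * (2 * (π : ℂ)) *
          (((∫ y in Icc (-δ) δ, C y)
            - ∫ y in Icc (-δ) δ, C y * Real.cos ((h : ℝ) * y) : ℝ) : ℂ)) := by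
    have hinner : ∀ x : ℝ,
        (∫ y in s, (C y : ℂ) *
            (Complex.exp ((h : ℂ) * ((x : ℝ) + y : ℝ) * Complex.I)
              - Complex.exp ((h : ℂ) * (x : ℂ) * Complex.I)))
        = Complex.exp ((h:ℂ) * x * Complex.I) *
            ∫ y in s, (C y : ℂ) * (Complex.exp ((h:ℂ) * y * Complex.I) - 1) := by
      intro x
      rw [← integral_const_mul]
      apply setIntegral_congr_fun measurableSet_Icc
      intro y _
      dsimp only
      have : (h:ℂ) * (((x:ℝ) + y : ℝ) : ℂ) * Complex.I
          = (h:ℂ) * x * Complex.I + (h:ℂ) * y * Complex.I := by push_cast; ring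
      rw [this, Complex.exp_add]
      ring
    simp_rw [← hs, hinner, hJ]
    have hcomb : ∀ x : ℝ, Complex.exp ((k:ℂ) * x * Complex.I) *
        (Complex.exp ((h:ℂ) * x * Complex.I) *
          (((∫ y in s, C y * Real.cos ((h:ℝ)*y)) - ∫ y in s, C y : ℝ) : ℂ))
        = Complex.exp ((((h+k:ℤ)):ℂ) * x * Complex.I) *
          (((∫ y in s, C y * Real.cos ((h:ℝ)*y)) - ∫ y in s, C y : ℝ) : ℂ) := by
      intro x
      rw [← mul_assoc, ← Complex.exp_add]
      push_cast; ring_nf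
    simp_rw [hcomb]
    rw [integral_mul_const, key_orth (h+k)]
    by_cases hhk : h = -k
    · rw [if_pos (by omega : h + k = 0), if_pos hhk]
      push_cast
      ring
    · rw [if_neg (by omega : ¬ (h + k = 0)), if_neg hhk]
      simp
  refine ⟨part1, ?_, ?_⟩
  · have hcomb : ∀ x : ℝ, Complex.exp ((h:ℂ) * x * Complex.I) *
        Complex.exp ((k:ℂ) * x * Complex.I)
        = Complex.exp ((((h+k:ℤ)):ℂ) * x * Complex.I) := by
      intro x
      rw [← Complex.exp_add]
      push_cast; ring_nf
    simp_rw [hcomb]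
    rw [key_orth (h+k)]
    by_cases hhk : h = -k
    · rw [if_pos (by omega : h + k = 0), if_pos hhk]; ring
    · rw [if_neg (by omega : ¬ (h + k = 0)), if_neg hhk]; ring
  · rw [sub_nonneg]
    apply setIntegral_mono_on hcos hCint measurableSet_Icc
    intro y _
    calc C y * Real.cos ((h:ℝ)*y) ≤ C y * 1 :=
          mul_le_mul_of_nonneg_left (Real.cos_le_one _) (hCnonneg y)
      _ = C y := mul_one _
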